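/- Fisher consistency for the two-sided pointwise PDI risk: under the single-crossing structure (h continuous, h(a_L) ≤ α, h(a_U) ≤ α, exactly two solutions a₁ < a₂ of h = α, and h ≥ α on [a₁,a₂], h ≤ α off it), the pair (a₁, a₂) is a global minimizer of r(b,c) = (1−α)(∫_{a_L}^{b} h + ∫_c^{a_U} h) + α∫_b^c (1−h) over {(b,c): a_L ≤ b ≤ c ≤ a_U}, and any other minimizer (b,c) satisfies ∫_{a₁}^{b}(h−α) = 0 and ∫_{c}^{a₂}(h−α) = 0. -/
import Mathlib


open Set intervalIntegral

theorem two_sided_fisher_consistency (aL aU α : ℝ) (h : ℝ → ℝ) (hlt : aL < aU)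
    (hα : α ∈ Ioo (0 : ℝ) 1)
    (hcont : ContinuousOn h (Icc aL aU))
    (hrange : ∀ a ∈ Icc aL aU, h a ∈ Icc (0 : ℝ) 1)
    (hL : h aL ≤ α) (hU : h aU ≤ α)
    (a₁ a₂ : ℝ) (h₁ : a₁ ∈ Icc aL aU) (h₂ : a₂ ∈ Icc aL aU) (h12 : a₁ < a₂)
    (heq₁ : h a₁ = α) (heq₂ : h a₂ = α)
    (huniq : ∀ a ∈ Icc aL aU, h a = α → a = a₁ ∨ a = a₂)
    (hin : ∀ a ∈ Icc a₁ a₂, α ≤ h a)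
    (hout : ∀ a ∈ Icc aL a₁ ∪ Icc a₂ aU, h a ≤ α)
    (r : ℝ → ℝ → ℝ)
    (hr : ∀ b c, r b c =
      (1 - α) * ((∫ a in aL..b, h a) + ∫ a in c..aU, h a) +
      α * ∫ a in b..c, (1 - h a)) :
    (∀ b c : ℝ, aL ≤ b → b ≤ c → c ≤ aU → r a₁ a₂ ≤ r b c) ∧
    (∀ b c : ℝ, aL ≤ b → b ≤ c → c ≤ aU → r b c = r a₁ a₂ →
      (∫ a in a₁..b, (h a - α)) = 0 ∧ (∫ a in c..a₂, (h a - α)) = 0) := by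
  obtain ⟨hL1, hU1⟩ := h₁
  obtain ⟨hL2, hU2⟩ := h₂
  -- integrability of h - α on any subinterval
  have hInt : ∀ u v : ℝ, u ∈ Icc aL aU → v ∈ Icc aL aU →
      IntervalIntegrable (fun a => h a - α) MeasureTheory.volume u v := by
    intro u v hu hv
    exact ((hcont.mono (uIcc_subset_Icc hu hv)).sub continuousOn_const).intervalIntegrable
  have hInth : ∀ u v : ℝ, u ∈ Icc aL aU → v ∈ Icc aL aU →
      IntervalIntegrable h MeasureTheory.volume u v := by
    intro u v hu hv
    exact (hcont.mono (uIcc_subset_Icc hu hv)).intervalIntegrable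
  -- express ∫ h and ∫ (1-h) in terms of ∫ (h-α)
  have hsplit : ∀ u v : ℝ, u ∈ Icc aL aU → v ∈ Icc aL aU →
      (∫ a in u..v, h a) = (∫ a in u..v, (h a - α)) + α * (v - u) := by
    intro u v hu hv
    have := intervalIntegral.integral_sub (hInth u v hu hv)
      (_root_.intervalIntegrable_const (c := α))
    rw [intervalIntegral.integral_const] at this
    rw [this]; simp [smul_eq_mul]; ring
  have hsplit1 : ∀ u v : ℝ, u ∈ Icc aL aU → v ∈ Icc aL aU →
      (∫ a in u..v, (1 - h a)) = (1 - α) * (v - u) - (∫ a in u..v, (h a - α)) := by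
    intro u v hu hv
    have := intervalIntegral.integral_sub (_root_.intervalIntegrable_const (c := (1:ℝ)))
      (hInth u v hu hv)
    rw [intervalIntegral.integral_const, hsplit u v hu hv] at this
    rw [this]; simp [smul_eq_mul]; ring
  -- key identity
  have key : ∀ b c : ℝ, aL ≤ b → b ≤ c → c ≤ aU →
      r b c = r a₁ a₂ + (∫ a in a₁..b, (h a - α)) + (∫ a in c..a₂, (h a - α)) := by
    intro b c hb hbc hc
    have hbm : b ∈ Icc aL aU := ⟨hb, hbc.trans hc⟩
    have hcm : c ∈ Icc aL aU := ⟨hb.trans hbc, hc⟩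
    have hLm : aL ∈ Icc aL aU := ⟨le_refl _, hlt.le⟩
    have hUm : aU ∈ Icc aL aU := ⟨hlt.le, le_refl _⟩
    have h1m : a₁ ∈ Icc aL aU := ⟨hL1, hU1⟩
    have h2m : a₂ ∈ Icc aL aU := ⟨hL2, hU2⟩
    rw [hr b c, hr a₁ a₂, hsplit aL b hLm hbm, hsplit aL a₁ hLm h1m,
      hsplit c aU hcm hUm, hsplit a₂ aU h2m hUm, hsplit1 b c hbm hcm,
      hsplit1 a₁ a₂ h1m h2m]
    -- additivity
    have e1 : (∫ a in aL..a₁, (h a - α)) + (∫ a in a₁..b, (h a - α)) =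
        ∫ a in aL..b, (h a - α) :=
      intervalIntegral.integral_add_adjacent_intervals (hInt _ _ hLm h1m) (hInt _ _ h1m hbm)
    have e2 : (∫ a in c..a₂, (h a - α)) + (∫ a in a₂..aU, (h a - α)) =
        ∫ a in c..aU, (h a - α) :=
      intervalIntegral.integral_add_adjacent_intervals (hInt _ _ hcm h2m) (hInt _ _ h2m hUm)
    have e3 : (∫ a in b..a₁, (h a - α)) + (∫ a in a₁..a₂, (h a - α)) =
        ∫ a in b..a₂, (h a - α) :=
      intervalIntegral.integral_add_adjacent_intervals (hInt _ _ hbm h1m) (hInt _ _ h1m h2m)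
    have e4 : (∫ a in b..a₂, (h a - α)) + (∫ a in a₂..c, (h a - α)) =
        ∫ a in b..c, (h a - α) :=
      intervalIntegral.integral_add_adjacent_intervals (hInt _ _ hbm h2m) (hInt _ _ h2m hcm)
    have e5 : (∫ a in b..a₁, (h a - α)) = - ∫ a in a₁..b, (h a - α) :=
      intervalIntegral.integral_symm _ _
    have e6 : (∫ a in a₂..c, (h a - α)) = - ∫ a in c..a₂, (h a - α) :=
      intervalIntegral.integral_symm _ _
    rw [← e1, ← e2, ← e4, ← e3, e5, e6]
    ring
  -- sign lemmas
  have sign1 : ∀ b : ℝ, aL ≤ b → b ≤ a₂ → 0 ≤ ∫ a in a₁..b, (h a - α) := by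
    intro b hb hb2
    rcases le_or_gt a₁ b with hcase | hcase
    · exact intervalIntegral.integral_nonneg hcase
        (fun u hu => sub_nonneg.2 (hin u ⟨hu.1, hu.2.trans hb2⟩))
    · have : (0:ℝ) ≤ ∫ a in b..a₁, -(h a - α) := by
        refine intervalIntegral.integral_nonneg hcase.le (fun u hu => ?_)
        have := hout u (Or.inl ⟨hb.trans hu.1, hu.2⟩)
        linarith
      rw [intervalIntegral.integral_neg] at this
      rw [intervalIntegral.integral_symm]
      linarith
  have sign2 : ∀ c : ℝ, a₁ ≤ c → c ≤ aU → 0 ≤ ∫ a in c..a₂, (h a - α) := by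
    intro c hc1 hc
    rcases le_or_gt c a₂ with hcase | hcase
    · exact intervalIntegral.integral_nonneg hcase
        (fun u hu => sub_nonneg.2 (hin u ⟨hc1.trans hu.1, hu.2⟩))
    · have : (0:ℝ) ≤ ∫ a in a₂..c, -(h a - α) := by
        refine intervalIntegral.integral_nonneg hcase.le (fun u hu => ?_)
        have := hout u (Or.inr ⟨hu.1, hu.2.trans hc⟩)
        linarith
      rw [intervalIntegral.integral_neg] at this
      rw [intervalIntegral.integral_symm]
      linarith
  -- strict positivity of the middle integral
  have Mpos : 0 < ∫ a in a₁..a₂, (h a - α) := by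
    refine intervalIntegral.intervalIntegral_pos_of_pos_on
      (hInt _ _ ⟨hL1, hU1⟩ ⟨hL2, hU2⟩) (fun x hx => ?_) h12
    have hxm : x ∈ Icc aL aU := ⟨hL1.trans hx.1.le, hx.2.le.trans hU2⟩
    have hge : α ≤ h x := hin x ⟨hx.1.le, hx.2.le⟩
    rcases eq_or_lt_of_le hge with heq | hlt'
    · rcases huniq x hxm heq.symm with rfl | rfl
      · exact absurd hx.1 (lt_irrefl _)
      · exact absurd hx.2 (lt_irrefl _)
    · linarith
  -- master lemma
  have master : ∀ b c : ℝ, aL ≤ b → b ≤ c → c ≤ aU →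
      (0 ≤ (∫ a in a₁..b, (h a - α)) + (∫ a in c..a₂, (h a - α))) ∧
      ((∫ a in a₁..b, (h a - α)) + (∫ a in c..a₂, (h a - α)) = 0 →
        (∫ a in a₁..b, (h a - α)) = 0 ∧ (∫ a in c..a₂, (h a - α)) = 0) := by
    intro b c hb hbc hc
    have hbm : b ∈ Icc aL aU := ⟨hb, hbc.trans hc⟩
    have hcm : c ∈ Icc aL aU := ⟨hb.trans hbc, hc⟩
    rcases le_or_gt c a₁ with hca | hac
    · -- c ≤ a₁ : both b,c left of a₁
      have hsum : (∫ a in a₁..b, (h a - α)) + (∫ a in c..a₂, (h a - α)) =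
          (∫ a in a₁..a₂, (h a - α)) - (∫ a in b..c, (h a - α)) := by
        have e3 : (∫ a in c..a₁, (h a - α)) + (∫ a in a₁..a₂, (h a - α)) =
            ∫ a in c..a₂, (h a - α) :=
          intervalIntegral.integral_add_adjacent_intervals (hInt _ _ hcm ⟨hL1, hU1⟩)
            (hInt _ _ ⟨hL1, hU1⟩ ⟨hL2, hU2⟩)
        have e4 : (∫ a in b..c, (h a - α)) + (∫ a in c..a₁, (h a - α)) =
            ∫ a in b..a₁, (h a - α) :=
          intervalIntegral.integral_add_adjacent_intervals (hInt _ _ hbm hcm)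
            (hInt _ _ hcm ⟨hL1, hU1⟩)
        have e5 : (∫ a in b..a₁, (h a - α)) = - ∫ a in a₁..b, (h a - α) :=
          intervalIntegral.integral_symm _ _
        rw [← e3]; rw [e5] at e4; linarith
      have hneg : (∫ a in b..c, (h a - α)) ≤ 0 := by
        have : (0:ℝ) ≤ ∫ a in b..c, -(h a - α) := by
          refine intervalIntegral.integral_nonneg hbc (fun u hu => ?_)
          have := hout u (Or.inl ⟨hb.trans hu.1, hu.2.trans hca⟩)
          linarith
        rw [intervalIntegral.integral_neg] at this
        linarith
      constructor
      · rw [hsum]; linarith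
      · intro h0; rw [hsum] at h0; linarith
    · rcases le_or_gt a₂ b with hab2 | hb2
      · -- a₂ ≤ b : both b,c right of a₂
        have hsum : (∫ a in a₁..b, (h a - α)) + (∫ a in c..a₂, (h a - α)) =
            (∫ a in a₁..a₂, (h a - α)) - (∫ a in b..c, (h a - α)) := by
          have e3 : (∫ a in a₁..a₂, (h a - α)) + (∫ a in a₂..b, (h a - α)) =
              ∫ a in a₁..b, (h a - α) :=
            intervalIntegral.integral_add_adjacent_intervals
              (hInt _ _ ⟨hL1, hU1⟩ ⟨hL2, hU2⟩) (hInt _ _ ⟨hL2, hU2⟩ hbm)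
          have e4 : (∫ a in a₂..b, (h a - α)) + (∫ a in b..c, (h a - α)) =
              ∫ a in a₂..c, (h a - α) :=
            intervalIntegral.integral_add_adjacent_intervals
              (hInt _ _ ⟨hL2, hU2⟩ hbm) (hInt _ _ hbm hcm)
          have e5 : (∫ a in a₂..c, (h a - α)) = - ∫ a in c..a₂, (h a - α) :=
            intervalIntegral.integral_symm _ _
          rw [← e3]; rw [e5] at e4; linarith
        have hneg : (∫ a in b..c, (h a - α)) ≤ 0 := by
          have : (0:ℝ) ≤ ∫ a in b..c, -(h a - α) := by
            refine intervalIntegral.integral_nonneg hbc (fun u hu => ?_)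
            have := hout u (Or.inr ⟨hab2.trans hu.1, hu.2.trans hc⟩)
            linarith
          rw [intervalIntegral.integral_neg] at this
          linarith
        constructor
        · rw [hsum]; linarith
        · intro h0; rw [hsum] at h0; linarith
      · -- a₁ < c and b < a₂ : both sign lemmas apply
        have i1 := sign1 b hb hb2.le
        have i2 := sign2 c hac.le hc
        exact ⟨by linarith, fun h0 => ⟨by linarith, by linarith⟩⟩
  constructor
  · intro b c hb hbc hc
    have hk := key b c hb hbc hc
    have hm := (master b c hb hbc hc).1
    linarith
  · intro b c hb hbc hc heqr
    have hk := key b c hb hbc hc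
    exact (master b c hb hbc hc).2 (by linarith)
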